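/- The distinguishing chromatic index of the friendship graph F_n is 2n for every n ≥ 3. -/

import Mathlib

open SimpleGraph

/-- Two edges (as unordered pairs) are adjacent if they are distinct and share an endpoint. -/
def EdgesAdj {V : Type*} (e f : Sym2 V) : Prop := e ≠ f ∧ ∃ v, v ∈ e ∧ v ∈ f

/-- A proper edge labeling: adjacent edges of `G` receive different labels. -/
def IsProperEdgeLabeling {V : Type*} (G : SimpleGraph V) (c : Sym2 V → ℕ) : Prop :=
  ∀ e ∈ G.edgeSet, ∀ f ∈ G.edgeSet, EdgesAdj e f → c e ≠ c f

/-- An automorphism `φ` of `G` preserves the edge labeling `c`. -/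
def PreservesEdgeLabeling {V : Type*} (G : SimpleGraph V) (φ : G ≃g G) (c : Sym2 V → ℕ) : Prop :=
  ∀ e ∈ G.edgeSet, c (Sym2.map φ e) = c e

/-- A distinguishing edge labeling: only the identity automorphism preserves it. -/
def IsDistinguishingEdgeLabeling {V : Type*} (G : SimpleGraph V) (c : Sym2 V → ℕ) : Prop :=
  ∀ φ : G ≃g G, PreservesEdgeLabeling G φ c → ∀ v, φ v = v

/-- The chromatic index `χ'(G)`. -/
noncomputable def chromIndex {V : Type*} (G : SimpleGraph V) : ℕ :=
  sInf {d | ∃ c : Sym2 V → ℕ, IsProperEdgeLabeling G c ∧ ∀ e ∈ G.edgeSet, c e < d}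

/-- The distinguishing index `D'(G)`. -/
noncomputable def distIndex {V : Type*} (G : SimpleGraph V) : ℕ :=
  sInf {d | ∃ c : Sym2 V → ℕ, IsDistinguishingEdgeLabeling G c ∧ ∀ e ∈ G.edgeSet, c e < d}

/-- The distinguishing chromatic index `χ'_D(G)`. -/
noncomputable def distChromIndex {V : Type*} (G : SimpleGraph V) : ℕ :=
  sInf {d | ∃ c : Sym2 V → ℕ, IsProperEdgeLabeling G c ∧ IsDistinguishingEdgeLabeling G c ∧
      ∀ e ∈ G.edgeSet, c e < d}

/-- The friendship graph `F n`: `n` triangles sharing a common central vertex `none`. -/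
def friendshipGraph (n : ℕ) : SimpleGraph (Option (Fin n × Fin 2)) :=
  SimpleGraph.fromRel (fun x y =>
    x = none ∨ ∃ (i : Fin n) (a b : Fin 2), a ≠ b ∧ x = some (i, a) ∧ y = some (i, b))

namespace FG
variable {n : ℕ}

lemma adj_none_some (p : Fin n × Fin 2) : (friendshipGraph n).Adj none (some p) := by
  simp [friendshipGraph, fromRel_adj]

lemma adj_none_iff (w : Option (Fin n × Fin 2)) :
    (friendshipGraph n).Adj none w ↔ ∃ p, w = some p := by
  cases w with
  | none => simp [friendshipGraph, fromRel_adj]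
  | some p => simpa using adj_none_some p

lemma adj_some_some (i j : Fin n) (a b : Fin 2) :
    (friendshipGraph n).Adj (some (i,a)) (some (j,b)) ↔ i = j ∧ a ≠ b := by
  simp only [friendshipGraph, fromRel_adj]
  constructor
  · rintro ⟨hne, h | h⟩
    · rcases h with h | ⟨i', a', b', hab, h1, h2⟩
      · exact absurd h (by simp)
      · simp only [Option.some.injEq, Prod.mk.injEq] at h1 h2
        refine ⟨h1.1.trans h2.1.symm, ?_⟩
        rw [h1.2, h2.2]; exact hab
    · rcases h with h | ⟨i', a', b', hab, h1, h2⟩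
      · exact absurd h (by simp)
      · simp only [Option.some.injEq, Prod.mk.injEq] at h1 h2
        refine ⟨h2.1.trans h1.1.symm, ?_⟩
        rw [h1.2, h2.2]; exact hab.symm
  · rintro ⟨rfl, hab⟩
    exact ⟨by simp [hab], Or.inl (Or.inr ⟨i, a, b, hab, rfl, rfl⟩)⟩

/-- Every edge is a spoke or a base edge. -/
lemma edge_cases (e : Sym2 (Option (Fin n × Fin 2)))
    (he : e ∈ (friendshipGraph n).edgeSet) :
    (∃ i a, e = s((none : Option (Fin n × Fin 2)), some (i,a))) ∨
    (∃ i : Fin n, e = s(some (i,(0:Fin 2)), some (i,1))) := by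
  induction e using Sym2.ind with
  | _ x y =>
    rw [mem_edgeSet] at he
    match x, y with
    | none, none => exact absurd he (by simp [friendshipGraph, fromRel_adj])
    | none, some (i,a) => exact Or.inl ⟨i, a, rfl⟩
    | some (i,a), none => exact Or.inl ⟨i, a, Sym2.eq_swap⟩
    | some (i,a), some (j,b) =>
      rw [adj_some_some] at he
      obtain ⟨rfl, hab⟩ := he
      right
      refine ⟨i, ?_⟩
      fin_cases a <;> fin_cases b <;> simp_all [Sym2.eq_swap]

def lab (n : ℕ) : Option (Fin n × Fin 2) → Option (Fin n × Fin 2) → ℕ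
  | none, none => 0
  | none, some (i,a) => 2*(i:ℕ) + (a:ℕ)
  | some (i,a), none => 2*(i:ℕ) + (a:ℕ)
  | some (i,_), some (j,_) => (2 * max (i:ℕ) (j:ℕ) + 2) % (2*n)

lemma lab_symm (n : ℕ) : ∀ x y, lab n x y = lab n y x := by
  rintro (_|⟨i,a⟩) (_|⟨j,b⟩) <;> simp [lab, Nat.max_comm]

def c (n : ℕ) : Sym2 (Option (Fin n × Fin 2)) → ℕ := Sym2.lift ⟨lab n, lab_symm n⟩

lemma c_spoke (i : Fin n) (a : Fin 2) :
    c n s((none : Option (Fin n × Fin 2)), some (i,a)) = 2*(i:ℕ) + (a:ℕ) := rfl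

lemma c_base (i : Fin n) :
    c n s(some (i,(0:Fin 2)), some (i,1)) = (2*(i:ℕ) + 2) % (2*n) := by
  simp [c, lab]

lemma base_mod (i : Fin n) :
    ((2*(i:ℕ) + 2) % (2*n) = 2*(i:ℕ) + 2 ∧ (i:ℕ) + 1 < n) ∨
    ((2*(i:ℕ) + 2) % (2*n) = 0 ∧ (i:ℕ) + 1 = n) := by
  have hi := i.isLt
  rcases lt_or_eq_of_le (Nat.succ_le_of_lt hi) with h | h
  · exact Or.inl ⟨Nat.mod_eq_of_lt (by omega), h⟩
  · right
    refine ⟨?_, h⟩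
    have : 2*(i:ℕ) + 2 = 2*n := by omega
    rw [this, Nat.mod_self]

lemma proper (hn : 3 ≤ n) : IsProperEdgeLabeling (friendshipGraph n) (c n) := by
  rintro e he f hf ⟨hne, v, hve, hvf⟩
  rcases edge_cases e he with ⟨i,a,rfl⟩ | ⟨i,rfl⟩ <;>
    rcases edge_cases f hf with ⟨j,b,rfl⟩ | ⟨j,rfl⟩
  · -- spoke spoke
    rw [c_spoke, c_spoke]
    intro hc
    have hi : i = j := Fin.ext (by omega)
    have ha : a = b := Fin.ext (by have := a.isLt; have := b.isLt; omega)
    exact hne (by rw [hi, ha])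
  · -- spoke base
    rw [c_spoke, c_base]
    rcases Sym2.mem_iff.mp hve with rfl | rfl
    · rcases Sym2.mem_iff.mp hvf with h | h <;> simp at h
    · rcases Sym2.mem_iff.mp hvf with h | h <;>
      · simp only [Option.some.injEq, Prod.mk.injEq] at h
        obtain ⟨rfl, rfl⟩ := h
        rcases base_mod i with ⟨hm, hlt⟩ | ⟨hm, heq⟩ <;> rw [hm] <;>
          (simp only [Fin.val_zero, Fin.val_one]; omega)
  · -- base spoke
    rw [c_base, c_spoke]
    rcases Sym2.mem_iff.mp hvf with rfl | rfl
    · rcases Sym2.mem_iff.mp hve with h | h <;> simp at h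
    · rcases Sym2.mem_iff.mp hve with h | h <;>
      · simp only [Option.some.injEq, Prod.mk.injEq] at h
        obtain ⟨rfl, rfl⟩ := h
        rcases base_mod j with ⟨hm, hlt⟩ | ⟨hm, heq⟩ <;> rw [hm] <;>
          (simp only [Fin.val_zero, Fin.val_one]; omega)
  · -- base base
    exfalso
    apply hne
    rcases Sym2.mem_iff.mp hve with rfl | rfl <;>
      rcases Sym2.mem_iff.mp hvf with h | h <;>
      · simp only [Option.some.injEq, Prod.mk.injEq] at h
        rw [h.1]

lemma fin2_eq : ∀ (a b b' : Fin 2), b ≠ a → b' ≠ a → b = b' := by decide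

lemma phi_none (hn : 3 ≤ n) (φ : friendshipGraph n ≃g friendshipGraph n) :
    φ none = none := by
  by_contra h
  obtain ⟨⟨i, a⟩, hφ⟩ : ∃ p, φ none = some p := by
    cases hp : φ none with
    | none => exact absurd hp h
    | some p => exact ⟨p, rfl⟩
  have key : ∀ p : Fin n × Fin 2,
      φ (some p) = none ∨ ∃ b, b ≠ a ∧ φ (some p) = some (i, b) := by
    intro p
    have hadj : (friendshipGraph n).Adj (φ none) (φ (some p)) :=
      (Iso.map_adj_iff φ).mpr (adj_none_some p)
    rw [hφ] at hadj
    cases hw : φ (some p) with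
    | none => exact Or.inl rfl
    | some q =>
      rw [hw] at hadj
      obtain ⟨j, b⟩ := q
      rw [adj_some_some] at hadj
      exact Or.inr ⟨b, hadj.2.symm, by rw [hadj.1]⟩
  have inj : Function.Injective φ := φ.toEquiv.injective
  have h1 := key (⟨0, by omega⟩, 0)
  have h2 := key (⟨0, by omega⟩, 1)
  have h3 := key (⟨1, by omega⟩, 0)
  rcases h1 with h1 | ⟨b1, hb1, h1⟩ <;> rcases h2 with h2 | ⟨b2, hb2, h2⟩ <;>
    rcases h3 with h3 | ⟨b3, hb3, h3⟩
  · exact absurd (inj (h1.trans h2.symm)) (by simp [Prod.ext_iff, Fin.ext_iff])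
  · exact absurd (inj (h1.trans h2.symm)) (by simp [Prod.ext_iff, Fin.ext_iff])
  · exact absurd (inj (h1.trans h3.symm)) (by simp [Prod.ext_iff, Fin.ext_iff])
  · rw [fin2_eq a b2 b3 hb2 hb3] at h2
    exact absurd (inj (h2.trans h3.symm)) (by simp [Prod.ext_iff, Fin.ext_iff])
  · exact absurd (inj (h2.trans h3.symm)) (by simp [Prod.ext_iff, Fin.ext_iff])
  · rw [fin2_eq a b1 b3 hb1 hb3] at h1
    exact absurd (inj (h1.trans h3.symm)) (by simp [Prod.ext_iff, Fin.ext_iff])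
  · rw [fin2_eq a b1 b2 hb1 hb2] at h1
    exact absurd (inj (h1.trans h2.symm)) (by simp [Prod.ext_iff, Fin.ext_iff])
  · rw [fin2_eq a b1 b2 hb1 hb2] at h1
    exact absurd (inj (h1.trans h2.symm)) (by simp [Prod.ext_iff, Fin.ext_iff])

lemma disting (hn : 3 ≤ n) : IsDistinguishingEdgeLabeling (friendshipGraph n) (c n) := by
  intro φ hp v
  have h0 : φ none = none := phi_none hn φ
  cases v with
  | none => exact h0
  | some p =>
    obtain ⟨i, a⟩ := p
    have he : s((none : Option (Fin n × Fin 2)), some (i,a)) ∈ (friendshipGraph n).edgeSet :=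
      (SimpleGraph.mem_edgeSet _).mpr (adj_none_some _)
    have hlab := hp _ he
    obtain ⟨⟨j, b⟩, hjb⟩ : ∃ p, φ (some (i,a)) = some p := by
      apply (adj_none_iff _).mp
      rw [← h0]
      exact (Iso.map_adj_iff φ).mpr (adj_none_some _)
    rw [Sym2.map_pair_eq, h0, hjb, c_spoke, c_spoke] at hlab
    have hj : j = i := Fin.ext (by have := a.isLt; have := b.isLt; omega)
    have hb : b = a := Fin.ext (by have := a.isLt; have := b.isLt; omega)
    rw [hjb, hj, hb]

lemma c_lt (hn : 3 ≤ n) : ∀ e ∈ (friendshipGraph n).edgeSet, c n e < 2 * n := by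
  intro e he
  rcases edge_cases e he with ⟨i, a, rfl⟩ | ⟨i, rfl⟩
  · rw [c_spoke]
    have := i.isLt; have := a.isLt; omega
  · rw [c_base]
    exact Nat.mod_lt _ (by omega)

end FG

theorem stmt11 (n : ℕ) (hn : 3 ≤ n) :
    distChromIndex (friendshipGraph n) = 2 * n := by
  have hmem : 2 * n ∈ {d | ∃ c : Sym2 (Option (Fin n × Fin 2)) → ℕ,
      IsProperEdgeLabeling (friendshipGraph n) c ∧
      IsDistinguishingEdgeLabeling (friendshipGraph n) c ∧
      ∀ e ∈ (friendshipGraph n).edgeSet, c e < d} :=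
    ⟨FG.c n, FG.proper hn, FG.disting hn, FG.c_lt hn⟩
  have hlb : ∀ d, (∃ c : Sym2 (Option (Fin n × Fin 2)) → ℕ,
      IsProperEdgeLabeling (friendshipGraph n) c ∧
      IsDistinguishingEdgeLabeling (friendshipGraph n) c ∧
      ∀ e ∈ (friendshipGraph n).edgeSet, c e < d) → 2 * n ≤ d := by
    rintro d ⟨c, hc, -, hb⟩
    have hcard : (Finset.univ : Finset (Fin n × Fin 2)).card ≤ (Finset.range d).card := by
      apply Finset.card_le_card_of_injOn (fun p => c s(none, some p))
      · intro p _
        rw [Finset.mem_coe, Finset.mem_range]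
        exact hb _ ((SimpleGraph.mem_edgeSet _).mpr (FG.adj_none_some p))
      · intro p _ q _ h
        by_contra hpq
        refine hc _ ((SimpleGraph.mem_edgeSet _).mpr (FG.adj_none_some p))
          _ ((SimpleGraph.mem_edgeSet _).mpr (FG.adj_none_some q)) ⟨?_, none, ?_, ?_⟩ h
        · intro heq
          rw [Sym2.eq_iff] at heq
          rcases heq with ⟨-, h2⟩ | ⟨h1, -⟩
          · exact hpq (Option.some_injective _ h2)
          · exact absurd h1 (by simp)
        · exact Sym2.mem_iff.mpr (Or.inl rfl)
        · exact Sym2.mem_iff.mpr (Or.inl rfl)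
    simp only [Finset.card_univ, Fintype.card_prod, Fintype.card_fin, Finset.card_range] at hcard
    omega
  unfold distChromIndex
  refine le_antisymm (Nat.sInf_le hmem) ?_
  exact hlb _ (Nat.sInf_mem ⟨_, hmem⟩)
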